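/- Let S be the unilateral shift on ℓ²(ℕ, ℂ), i.e. S(x₀, x₁, x₂, …) = (0, x₀, x₁, …). Suppose T ∈ B(ℓ²) is an asymptotic Toeplitz operator in the Calkin algebra, i.e. there exists Q ∈ B(ℓ²) such that inf{‖S*ⁿTSⁿ − Q + K‖ : K compact} → 0 as n → ∞. Then T is essentially Toeplitz, i.e. S*TS − T is a compact operator. -/

import Mathlib

open ContinuousLinearMap Filter Topology

noncomputable section


local notation "H2" => lp (fun _ : ℕ => ℂ) 2

/-- Distance (in norm) from `-X` to the compact operators; equivalently the Calkin norm. -/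
def dC (X : H2 →L[ℂ] H2) : ℝ :=
  sInf {r : ℝ | ∃ K : H2 →L[ℂ] H2, IsCompactOperator ⇑K ∧ r = ‖X + K‖}

lemma dC_set_nonempty (X : H2 →L[ℂ] H2) :
    {r : ℝ | ∃ K : H2 →L[ℂ] H2, IsCompactOperator ⇑K ∧ r = ‖X + K‖}.Nonempty :=
  ⟨‖X + 0‖, 0, by simpa using isCompactOperator_zero, rfl⟩

lemma dC_set_bddBelow (X : H2 →L[ℂ] H2) :
    BddBelow {r : ℝ | ∃ K : H2 →L[ℂ] H2, IsCompactOperator ⇑K ∧ r = ‖X + K‖} :=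
  ⟨0, by rintro r ⟨K, hK, rfl⟩; positivity⟩

lemma dC_nonneg (X : H2 →L[ℂ] H2) : 0 ≤ dC X :=
  le_csInf (dC_set_nonempty X) (by rintro r ⟨K, hK, rfl⟩; positivity)

lemma dC_le (X K : H2 →L[ℂ] H2) (hK : IsCompactOperator ⇑K) : dC X ≤ ‖X + K‖ :=
  csInf_le (dC_set_bddBelow X) ⟨K, hK, rfl⟩

lemma compact_mul_left {A B : H2 →L[ℂ] H2} (h : IsCompactOperator ⇑B) :
    IsCompactOperator ⇑(A * B) := by
  have : ⇑(A * B) = ⇑A ∘ ⇑B := by ext x; simp [ContinuousLinearMap.mul_apply]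
  rw [this]; exact h.clm_comp A

lemma compact_mul_right {A B : H2 →L[ℂ] H2} (h : IsCompactOperator ⇑A) :
    IsCompactOperator ⇑(A * B) := by
  have : ⇑(A * B) = ⇑A ∘ ⇑B := by ext x; simp [ContinuousLinearMap.mul_apply]
  rw [this]; exact h.comp_clm B

lemma compact_add {A B : H2 →L[ℂ] H2} (hA : IsCompactOperator ⇑A) (hB : IsCompactOperator ⇑B) :
    IsCompactOperator ⇑(A + B) := by
  have : ⇑(A + B) = ⇑A + ⇑B := by ext x; simp
  rw [this]; exact hA.add hB

lemma compact_sub {A B : H2 →L[ℂ] H2} (hA : IsCompactOperator ⇑A) (hB : IsCompactOperator ⇑B) :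
    IsCompactOperator ⇑(A - B) := by
  have : ⇑(A - B) = ⇑A - ⇑B := by ext x; simp
  rw [this]; exact hA.sub hB

lemma compact_neg {A : H2 →L[ℂ] H2} (hA : IsCompactOperator ⇑A) :
    IsCompactOperator ⇑(-A) := by
  have : ⇑(-A) = -⇑A := by ext x; simp
  rw [this]; exact hA.neg

lemma dC_add_le (X Y : H2 →L[ℂ] H2) : dC (X + Y) ≤ dC X + dC Y := by
  have key : ∀ a ∈ {r : ℝ | ∃ K : H2 →L[ℂ] H2, IsCompactOperator ⇑K ∧ r = ‖X + K‖},
      ∀ b ∈ {r : ℝ | ∃ K : H2 →L[ℂ] H2, IsCompactOperator ⇑K ∧ r = ‖Y + K‖},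
      dC (X + Y) ≤ a + b := by
    rintro a ⟨K₁, hK₁, rfl⟩ b ⟨K₂, hK₂, rfl⟩
    calc dC (X + Y) ≤ ‖(X + Y) + (K₁ + K₂)‖ := dC_le _ _ (compact_add hK₁ hK₂)
    _ ≤ ‖X + K₁‖ + ‖Y + K₂‖ := by
        rw [show (X + Y) + (K₁ + K₂) = (X + K₁) + (Y + K₂) by abel]
        exact norm_add_le _ _
  have h1 : ∀ a ∈ {r : ℝ | ∃ K : H2 →L[ℂ] H2, IsCompactOperator ⇑K ∧ r = ‖X + K‖},
      dC (X + Y) - a ≤ dC Y := by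
    intro a ha
    refine le_csInf (dC_set_nonempty Y) fun b hb => ?_
    linarith [key a ha b hb]
  have h2 : dC (X + Y) - dC Y ≤ dC X := by
    refine le_csInf (dC_set_nonempty X) fun a ha => ?_
    linarith [h1 a ha]
  linarith

lemma dC_neg (X : H2 →L[ℂ] H2) : dC (-X) = dC X := by
  unfold dC
  congr 1
  ext r
  constructor
  · rintro ⟨K, hK, rfl⟩
    exact ⟨-K, compact_neg hK, by rw [show X + -K = -(-X + K) by abel, norm_neg]⟩
  · rintro ⟨K, hK, rfl⟩
    exact ⟨-K, compact_neg hK, by rw [show -X + -K = -(X + K) by abel, norm_neg]⟩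

lemma dC_sub_le (X Y : H2 →L[ℂ] H2) : dC (X - Y) ≤ dC X + dC Y := by
  have := dC_add_le X (-Y)
  rw [dC_neg] at this
  simpa [sub_eq_add_neg] using this

/-- The key inequality: conjugating by the shift does not decrease the Calkin distance. -/
lemma dC_le_dC_conj (S : H2 →L[ℂ] H2) (hS1 : ‖S‖ ≤ 1) (hS2 : ‖adjoint S‖ ≤ 1)
    (hP : IsCompactOperator ⇑((1 : H2 →L[ℂ] H2) - S * adjoint S)) (X : H2 →L[ℂ] H2) :
    dC X ≤ dC (adjoint S * X * S) := by
  refine le_csInf (dC_set_nonempty _) ?_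
  rintro r ⟨K, hK, rfl⟩
  set P : H2 →L[ℂ] H2 := 1 - S * adjoint S with hPdef
  set Y : H2 →L[ℂ] H2 := adjoint S * X * S + K with hY
  set K' : H2 →L[ℂ] H2 := S * Y * adjoint S - X with hK'
  have hXK' : X + K' = S * Y * adjoint S := by rw [hK']; abel
  have hK'c : IsCompactOperator ⇑K' := by
    have h1 : K' = S * K * adjoint S - (P * X + X * P - P * X * P) := by
      rw [hK', hY, hPdef]; noncomm_ring
    rw [h1]
    exact compact_sub (compact_mul_right (compact_mul_left hK))
      (compact_sub (compact_add (compact_mul_right hP) (compact_mul_left hP))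
        (compact_mul_left hP))
  calc dC X ≤ ‖X + K'‖ := dC_le _ _ hK'c
  _ = ‖S * Y * adjoint S‖ := by rw [hXK']
  _ ≤ ‖S * Y‖ * ‖adjoint S‖ := norm_mul_le _ _
  _ ≤ (‖S‖ * ‖Y‖) * ‖adjoint S‖ := by
      exact mul_le_mul_of_nonneg_right (norm_mul_le _ _) (norm_nonneg _)
  _ ≤ (1 * ‖Y‖) * 1 := by gcongr
  _ = ‖Y‖ := by ring



local notation "⟪" x ", " y "⟫" => @inner ℂ _ _ x y

lemma compact_rank_one (e : H2) : IsCompactOperator (fun x : H2 => ⟪e, x⟫ • e) := by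
  rw [isCompactOperator_iff_exists_mem_nhds_image_subset_compact]
  refine ⟨Metric.closedBall 0 1, Metric.closedBall_mem_nhds 0 one_pos,
    (fun c : ℂ => c • e) '' Metric.closedBall 0 ‖e‖,
    (isCompact_closedBall 0 ‖e‖).image (by continuity), ?_⟩
  rintro y ⟨x, hx, rfl⟩
  refine ⟨⟪e, x⟫, ?_, rfl⟩
  simp only [Metric.mem_closedBall, dist_zero_right] at hx ⊢
  calc ‖⟪e, x⟫‖ ≤ ‖e‖ * ‖x‖ := norm_inner_le_norm e x
  _ ≤ ‖e‖ * 1 := by gcongr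
  _ = ‖e‖ := mul_one _

section Shift
variable (S : H2 →L[ℂ] H2)
  (hS : ∀ x : H2, (S x : ∀ _ : ℕ, ℂ) 0 = 0 ∧
    ∀ n : ℕ, (S x : ∀ _ : ℕ, ℂ) (n + 1) = (x : ∀ _ : ℕ, ℂ) n)

include hS

lemma inner_shift (x y : H2) : ⟪S x, S y⟫ = ⟪x, y⟫ := by
  rw [lp.inner_eq_tsum, lp.inner_eq_tsum,
    Summable.tsum_eq_zero_add (lp.summable_inner (𝕜 := ℂ) (S x) (S y))]
  simp [RCLike.inner_apply, (hS x).1, (hS x).2, (hS y).2]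

lemma norm_shift_le : ‖S‖ ≤ 1 := by
  refine ContinuousLinearMap.opNorm_le_bound S zero_le_one fun x => ?_
  have h : ‖S x‖ = ‖x‖ := by
    rw [← Real.sqrt_sq (norm_nonneg (S x)), ← Real.sqrt_sq (norm_nonneg x),
      ← @inner_self_eq_norm_sq ℂ, ← @inner_self_eq_norm_sq ℂ, inner_shift S hS]
  rw [h, one_mul]

omit hS in
lemma coord' (f : H2) (n : ℕ) : ⟪(lp.single 2 n (1 : ℂ) : H2), f⟫ = (f : ∀ _ : ℕ, ℂ) n := by
  rw [lp.inner_single_left]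
  simp [RCLike.inner_apply]

lemma shift_single (n : ℕ) :
    S (lp.single 2 n (1 : ℂ)) = lp.single 2 (n + 1) (1 : ℂ) := by
  apply lp.ext
  funext k
  cases k with
  | zero => simp [(hS _).1, lp.single_apply]
  | succ k =>
    rw [(hS _).2]
    by_cases h : k = n
    · subst h; simp [lp.single_apply]
    · rw [lp.single_apply, lp.single_apply, Pi.single_apply, Pi.single_apply, if_neg h,
        if_neg (by omega)]

lemma adjoint_coord (x : H2) (n : ℕ) :
    ((adjoint S) x : ∀ _ : ℕ, ℂ) n = (x : ∀ _ : ℕ, ℂ) (n + 1) := by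
  rw [← coord' (adjoint S x) n, ContinuousLinearMap.adjoint_inner_right,
    shift_single S hS, coord']

lemma proj_eq : ⇑((1 : H2 →L[ℂ] H2) - S * adjoint S)
    = fun x : H2 => ⟪(lp.single 2 0 (1 : ℂ) : H2), x⟫ • (lp.single 2 0 (1 : ℂ) : H2) := by
  funext x
  apply lp.ext
  funext k
  have hc : ⟪(lp.single 2 0 (1 : ℂ) : H2), x⟫ = (x : ∀ _ : ℕ, ℂ) 0 := coord' x 0
  have hL : (((1 : H2 →L[ℂ] H2) - S * adjoint S) x : ∀ _ : ℕ, ℂ) k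
      = (x : ∀ _ : ℕ, ℂ) k - (S (adjoint S x) : ∀ _ : ℕ, ℂ) k := by
    rw [ContinuousLinearMap.sub_apply, ContinuousLinearMap.one_apply,
      ContinuousLinearMap.mul_apply, lp.coeFn_sub]
    rfl
  rw [hL]
  have hR : ((⟪(lp.single 2 0 (1 : ℂ) : H2), x⟫ • (lp.single 2 0 (1 : ℂ) : H2) : H2)
      : ∀ _ : ℕ, ℂ) k = (x : ∀ _ : ℕ, ℂ) 0 * (lp.single 2 0 (1 : ℂ) : H2) k := by
    rw [lp.coeFn_smul, Pi.smul_apply, hc, smul_eq_mul]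
  rw [hR]
  cases k with
  | zero => simp [(hS _).1, lp.single_apply]
  | succ k =>
    rw [(hS _).2, adjoint_coord S hS]
    simp [lp.single_apply]

lemma proj_compact : IsCompactOperator ⇑((1 : H2 →L[ℂ] H2) - S * adjoint S) := by
  rw [proj_eq S hS]
  exact compact_rank_one _

end Shift

set_option maxHeartbeats 1000000 in
/-- **Proposition 4.9.** Let `S` be the unilateral shift on `ℓ²(ℕ, ℂ)`. If `T` is an
asymptotic Toeplitz operator in the Calkin algebra, i.e. for some `Q` the distance of
`S*ⁿTSⁿ − Q` to the compact operators tends to `0`, then `T` is essentially Toeplitz: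
`S*TS − T` is compact. -/
theorem stmt_17
    (S : lp (fun _ : ℕ => ℂ) 2 →L[ℂ] lp (fun _ : ℕ => ℂ) 2)
    (hS : ∀ x : lp (fun _ : ℕ => ℂ) 2,
      (S x : ∀ _ : ℕ, ℂ) 0 = 0 ∧ ∀ n : ℕ, (S x : ∀ _ : ℕ, ℂ) (n + 1) = (x : ∀ _ : ℕ, ℂ) n)
    (T : lp (fun _ : ℕ => ℂ) 2 →L[ℂ] lp (fun _ : ℕ => ℂ) 2)
    (hT : ∃ Q : lp (fun _ : ℕ => ℂ) 2 →L[ℂ] lp (fun _ : ℕ => ℂ) 2,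
      Tendsto (fun n : ℕ =>
          sInf {r : ℝ | ∃ K : lp (fun _ : ℕ => ℂ) 2 →L[ℂ] lp (fun _ : ℕ => ℂ) 2,
            IsCompactOperator ⇑K ∧ r = ‖(adjoint S) ^ n * T * S ^ n - Q + K‖})
        atTop (𝓝 0)) :
    IsCompactOperator (⇑(adjoint S * T * S - T)) := by
  obtain ⟨Q, hQ⟩ := hT
  have hS1 : ‖S‖ ≤ 1 := norm_shift_le S hS
  have hS2 : ‖adjoint S‖ ≤ 1 := by
    rw [show adjoint S = ContinuousLinearMap.adjoint S from rfl,
      LinearIsometryEquiv.norm_map]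
    exact hS1
  have hP := proj_compact S hS
  set D : H2 →L[ℂ] H2 := adjoint S * T * S - T with hD
  have hQ' : Tendsto (fun n : ℕ => dC ((adjoint S) ^ n * T * S ^ n - Q)) atTop (𝓝 0) := hQ
  have hiter : ∀ n : ℕ, dC D ≤ dC ((adjoint S) ^ n * D * S ^ n) := by
    intro n
    induction n with
    | zero => rw [pow_zero, pow_zero, one_mul, mul_one]
    | succ n ih =>
      refine ih.trans ?_
      have h1 : (adjoint S) ^ (n + 1) * D * S ^ (n + 1)
          = adjoint S * ((adjoint S) ^ n * D * S ^ n) * S := by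
        rw [pow_succ' (adjoint S) n, pow_succ S n]
        noncomm_ring
      rw [h1]
      exact dC_le_dC_conj S hS1 hS2 hP _
  have key : ∀ n : ℕ, dC D ≤ dC ((adjoint S) ^ (n + 1) * T * S ^ (n + 1) - Q)
      + dC ((adjoint S) ^ n * T * S ^ n - Q) := by
    intro n
    have h2 : (adjoint S) ^ n * D * S ^ n
        = ((adjoint S) ^ (n + 1) * T * S ^ (n + 1) - Q)
          - ((adjoint S) ^ n * T * S ^ n - Q) := by
      rw [hD, pow_succ (adjoint S) n, pow_succ' S n]
      noncomm_ring
    calc dC D ≤ dC ((adjoint S) ^ n * D * S ^ n) := hiter n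
    _ = dC (((adjoint S) ^ (n + 1) * T * S ^ (n + 1) - Q)
        - ((adjoint S) ^ n * T * S ^ n - Q)) := by rw [h2]
    _ ≤ _ + _ := dC_sub_le _ _
  have hlim : Tendsto (fun n : ℕ => dC ((adjoint S) ^ (n + 1) * T * S ^ (n + 1) - Q)
      + dC ((adjoint S) ^ n * T * S ^ n - Q)) atTop (𝓝 0) := by
    have h := (hQ'.comp (tendsto_add_atTop_nat 1)).add hQ'
    simpa using h
  have hD0 : dC D = 0 := le_antisymm (ge_of_tendsto' hlim key) (dC_nonneg D)
  have hcl : D ∈ closure {K : H2 →L[ℂ] H2 | IsCompactOperator ⇑K} := by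
    rw [Metric.mem_closure_iff]
    intro ε hε
    obtain ⟨r, ⟨K, hK, rfl⟩, hrε⟩ := exists_lt_of_csInf_lt (dC_set_nonempty D) (hD0 ▸ hε)
    refine ⟨-K, compact_neg hK, ?_⟩
    rwa [dist_eq_norm, sub_neg_eq_add]
  exact isClosed_setOf_isCompactOperator.closure_subset hcl

end
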